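/- Let f : ℝⁿ → [0,+∞) be an integrable log-concave function with ‖f‖_∞ = f(0) = 1, and write f = exp(−u) with u : ℝⁿ → [0,+∞] convex. Then for every t > 1 the set H_t(f) = ⋃_{λ∈(0,1)} (log(t/λ))^{−1}·K_λ(f) is convex, and its closure equals the polar of the superlevel set of the polar function of f at level 1/t: closure(H_t(f)) = (K_{1/t}(f°))°, where f°(x) = exp(−u*(x)), u*(x) = sup_{y∈ℝⁿ} (⟨x,y⟩ − u(y)) is the Legendre transform of u, K_{1/t}(f°) = {x ∈ ℝⁿ : f°(x) ≥ 1/t}, and for a set K ⊆ ℝⁿ, K° = {x ∈ ℝⁿ : ⟨x,y⟩ ≤ 1 for all y ∈ K}. -/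

import Mathlib

open MeasureTheory Pointwise ENNReal

noncomputable section

/-- `H_t(f) = ⋃_{λ∈(0,1)} (log(t/λ))⁻¹·K_λ(f)` where `K_λ(f) = {x : f x ≥ λ}`. -/
def Hset {n : ℕ} (f : (Fin n → ℝ) → ℝ) (t : ℝ) : Set (Fin n → ℝ) :=
  ⋃ l ∈ Set.Ioo (0 : ℝ) 1, (Real.log (t / l))⁻¹ • {x : Fin n → ℝ | l ≤ f x}

/-- The Legendre transform `u*(x) = sup_y (⟨x,y⟩ - u(y)) ∈ [0,∞]` of the convex function
`u = -log f : ℝⁿ → [0,∞]` associated to a log-concave `f = exp(-u)` with `f 0 = 1`, `f ≤ 1`.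
Points where `f y = 0` (i.e. `u y = ∞`) contribute `-∞`, i.e. nothing; since
`u*(x) ≥ ⟨x,0⟩ - u(0) = 0`, clamping each term at `0` via `ENNReal.ofReal` gives exactly
`u*`. -/
def legendre {n : ℕ} (f : (Fin n → ℝ) → ℝ) (x : Fin n → ℝ) : ℝ≥0∞ :=
  ⨆ y : Fin n → ℝ,
    if f y = 0 then 0 else ENNReal.ofReal ((∑ i, x i * y i) + Real.log (f y))

/-- The polar of a set `K ⊆ ℝⁿ`: `K° = {x : ⟨x,y⟩ ≤ 1 for all y ∈ K}`. -/
def polarSet {n : ℕ} (K : Set (Fin n → ℝ)) : Set (Fin n → ℝ) :=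
  {x | ∀ y ∈ K, (∑ i, x i * y i) ≤ 1}

/-- Lemma 3.6 of the paper: for an integrable log-concave `f = exp(-u)` with
`‖f‖_∞ = f 0 = 1` and every `t > 1`, the set `H_t(f)` is convex and its closure equals the
polar of the superlevel set `K_{1/t}(f°) = {x : f°(x) ≥ 1/t} = {x : u*(x) ≤ log t}` of the
polar function `f° = exp(-u*)`. -/
theorem stmt_14 (n : ℕ)
    (f : (Fin n → ℝ) → ℝ) (hf_nonneg : ∀ x, 0 ≤ f x)
    (hf_int : Integrable f)
    (hf_lc : ∀ x y : Fin n → ℝ, ∀ θ : ℝ, 0 ≤ θ → θ ≤ 1 →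
      f x ^ (1 - θ) * f y ^ θ ≤ f ((1 - θ) • x + θ • y))
    (hf_le : ∀ x, f x ≤ 1) (hf0 : f 0 = 1)
    (t : ℝ) (ht : 1 < t) :
    Convex ℝ (Hset f t) ∧
    closure (Hset f t) =
      polarSet {x : Fin n → ℝ | legendre f x ≤ ENNReal.ofReal (Real.log t)} := by
  have ht0 : (0:ℝ) < t := lt_trans one_pos ht
  have hc : 0 < Real.log t := Real.log_pos ht
  set c := Real.log t with hcdef
  -- the target level set, in real terms
  set T : Set (Fin n → ℝ) :=
    {x | ∀ y, f y ≠ 0 → (∑ i, x i * y i) + Real.log (f y) ≤ c} with hTdef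
  have hTset : {x : Fin n → ℝ | legendre f x ≤ ENNReal.ofReal c} = T := by
    ext x
    simp only [hTdef, Set.mem_setOf_eq, legendre, iSup_le_iff]
    constructor
    · intro h y hy
      have hx := h y
      rw [if_neg hy] at hx
      exact (ENNReal.ofReal_le_ofReal_iff hc.le).mp hx
    · intro h y
      by_cases hy : f y = 0
      · simp [hy]
      · rw [if_neg hy]
        exact ENNReal.ofReal_le_ofReal (h y hy)
  -- positivity of log (t / l) for l ∈ (0,1)
  have hlog_pos : ∀ l ∈ Set.Ioo (0:ℝ) 1, 0 < Real.log (t / l) := by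
    intro l hl
    exact Real.log_pos ((one_lt_div hl.1).2 (hl.2.trans ht))
  have hlog_eq : ∀ l ∈ Set.Ioo (0:ℝ) 1, Real.log (t / l) = c - Real.log l := by
    intro l hl
    rw [Real.log_div (ne_of_gt ht0) (ne_of_gt hl.1)]
  -- membership description of Hset
  have hmem : ∀ z, z ∈ Hset f t ↔
      ∃ l ∈ Set.Ioo (0:ℝ) 1, ∃ y, l ≤ f y ∧ (Real.log (t / l))⁻¹ • y = z := by
    intro z
    simp only [Hset, Set.mem_iUnion, Set.mem_smul_set, Set.mem_setOf_eq]
    constructor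
    · rintro ⟨l, hl, y, hy, hz⟩
      exact ⟨l, hl, y, hy, hz⟩
    · rintro ⟨l, hl, y, hy, hz⟩
      exact ⟨l, hl, y, hy, hz⟩
  -- 0 ∈ Hset
  have h0mem : (0 : Fin n → ℝ) ∈ Hset f t := by
    rw [hmem]
    refine ⟨1/2, by norm_num, 0, by rw [hf0]; norm_num, smul_zero _⟩
  -- Convexity
  have hconv : Convex ℝ (Hset f t) := by
    intro z1 hz1 z2 hz2 a b ha hb hab
    rcases (hmem z1).1 hz1 with ⟨l1, hl1, y1, hy1, hz1'⟩
    rcases (hmem z2).1 hz2 with ⟨l2, hl2, y2, hy2, hz2'⟩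
    rcases eq_or_lt_of_le ha with ha0 | ha'
    · have hb1 : b = 1 := by linarith
      simpa [← ha0, hb1] using hz2
    rcases eq_or_lt_of_le hb with hb0 | hb'
    · have ha1 : a = 1 := by linarith
      simpa [← hb0, ha1] using hz1
    set r1 := Real.log (t / l1) with hr1def
    set r2 := Real.log (t / l2) with hr2def
    have hr1 : 0 < r1 := hlog_pos l1 hl1
    have hr2 : 0 < r2 := hlog_pos l2 hl2
    set w : ℝ := a / r1 + b / r2 with hwdef
    have hw : 0 < w := by positivity
    set μ : ℝ := (a / r1) / w with hμdef
    set ν : ℝ := (b / r2) / w with hνdef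
    have hμ : 0 < μ := by positivity
    have hν : 0 < ν := by positivity
    have hμν : μ + ν = 1 := by
      rw [hμdef, hνdef, ← add_div, hwdef, div_self (ne_of_gt hw)]
    set l : ℝ := l1 ^ μ * l2 ^ ν with hldef
    have hl1' := hl1.1
    have hl2' := hl2.1
    have hlpos : 0 < l := by
      apply mul_pos (Real.rpow_pos_of_pos hl1' μ) (Real.rpow_pos_of_pos hl2' ν)
    have hllt : l < 1 := by
      have h1 : l1 ^ μ < 1 := Real.rpow_lt_one hl1'.le hl1.2 hμ
      have h2 : l2 ^ ν ≤ 1 := Real.rpow_le_one hl2'.le hl2.2.le hν.le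
      calc l ≤ l1 ^ μ * 1 := by
              exact mul_le_mul_of_nonneg_left h2 (Real.rpow_pos_of_pos hl1' μ).le
        _ < 1 := by rw [mul_one]; exact h1
    set y : Fin n → ℝ := μ • y1 + ν • y2 with hydef
    have hfy : l ≤ f y := by
      have h1μ : 1 - ν = μ := by linarith
      have hlc := hf_lc y1 y2 ν hν.le (by linarith)
      rw [h1μ] at hlc
      refine le_trans ?_ hlc
      apply mul_le_mul
      · exact Real.rpow_le_rpow hl1'.le hy1 hμ.le
      · exact Real.rpow_le_rpow hl2'.le hy2 hν.le
      · exact (Real.rpow_pos_of_pos hl2' ν).le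
      · exact (Real.rpow_pos_of_pos (lt_of_lt_of_le hl1' hy1) μ).le
    -- the crucial identity: log (t / l) = 1 / w
    have hlogl : Real.log l = μ * Real.log l1 + ν * Real.log l2 := by
      rw [hldef, Real.log_mul (ne_of_gt (Real.rpow_pos_of_pos hl1' μ))
        (ne_of_gt (Real.rpow_pos_of_pos hl2' ν)), Real.log_rpow hl1', Real.log_rpow hl2']
    have hkey : Real.log (t / l) = μ * r1 + ν * r2 := by
      have hL1 : Real.log l1 = c - r1 := by
        rw [hr1def, hlog_eq l1 hl1]; ring
      have hL2 : Real.log l2 = c - r2 := by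
        rw [hr2def, hlog_eq l2 hl2]; ring
      rw [hlog_eq l ⟨hlpos, hllt⟩, hlogl]
      linear_combination (-c) * hμν - μ * hL1 - ν * hL2
    have hwl : w * Real.log (t / l) = 1 := by
      have e1 : w * μ = a / r1 := by rw [hμdef]; field_simp
      have e2 : w * ν = b / r2 := by rw [hνdef]; field_simp
      rw [hkey, mul_add, ← mul_assoc, ← mul_assoc, e1, e2,
        div_mul_cancel₀ _ (ne_of_gt hr1), div_mul_cancel₀ _ (ne_of_gt hr2), hab]
    have hinv : (Real.log (t / l))⁻¹ = w :=
      inv_eq_of_mul_eq_one_right (by rw [mul_comm]; exact hwl)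
    rw [hmem]
    refine ⟨l, ⟨hlpos, hllt⟩, y, hfy, ?_⟩
    rw [hinv, hydef, smul_add, smul_smul, smul_smul, hμdef, hνdef,
      mul_div_cancel₀ _ (ne_of_gt hw), mul_div_cancel₀ _ (ne_of_gt hw),
      ← hz1', ← hz2', smul_smul, smul_smul]
    congr 1 <;> congr 1 <;> field_simp
  refine ⟨hconv, ?_⟩
  rw [hTset]
  -- Hset ⊆ polarSet T
  have hsub : Hset f t ⊆ polarSet T := by
    intro z hz
    rcases (hmem z).1 hz with ⟨l, hl, y, hy, hz'⟩
    intro x hx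
    have hfy0 : f y ≠ 0 := ne_of_gt (lt_of_lt_of_le hl.1 hy)
    have h1 : (∑ i, x i * y i) + Real.log (f y) ≤ c := hx y hfy0
    have h2 : Real.log l ≤ Real.log (f y) := Real.log_le_log hl.1 hy
    have h3 : (∑ i, x i * y i) ≤ Real.log (t / l) := by
      rw [hlog_eq l hl]; linarith
    have hlt : 0 < Real.log (t / l) := hlog_pos l hl
    have hsum : (∑ i, z i * x i) = (Real.log (t / l))⁻¹ * ∑ i, x i * y i := by
      rw [← hz']
      rw [Finset.mul_sum]
      refine Finset.sum_congr rfl fun i _ => ?_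
      simp only [Pi.smul_apply, smul_eq_mul]
      ring
    rw [hsum]
    calc (Real.log (t / l))⁻¹ * ∑ i, x i * y i
        ≤ (Real.log (t / l))⁻¹ * Real.log (t / l) :=
          mul_le_mul_of_nonneg_left h3 (inv_nonneg.2 hlt.le)
      _ = 1 := inv_mul_cancel₀ (ne_of_gt hlt)
  have hpolar_closed : IsClosed (polarSet T) := by
    have heq : polarSet T = ⋂ y ∈ T, {x : Fin n → ℝ | ∑ i, x i * y i ≤ 1} := by
      ext x
      simp [polarSet, Set.mem_iInter]
    rw [heq]
    refine isClosed_biInter fun y hy => isClosed_le ?_ continuous_const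
    exact continuous_finset_sum _ fun i _ => (continuous_apply i).mul continuous_const
  refine Set.Subset.antisymm (closure_minimal hsub hpolar_closed) ?_
  -- reverse inclusion via separation
  intro z hz
  by_contra hzc
  obtain ⟨g, α, hg, hα⟩ :=
    geometric_hahn_banach_closed_point (hconv.closure) isClosed_closure hzc
  have hα0 : 0 < α := by
    have h := hg 0 (subset_closure h0mem)
    simpa using h
  set x0 : Fin n → ℝ := fun i => g (fun j => if i = j then 1 else 0) with hx0def
  have hgrep : ∀ v : Fin n → ℝ, g v = ∑ i, v i * x0 i := by
    intro v
    have h := LinearMap.pi_apply_eq_sum_univ (g : (Fin n → ℝ) →ₗ[ℝ] ℝ) v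
    simpa [hx0def, smul_eq_mul] using h
  set x : Fin n → ℝ := α⁻¹ • x0 with hxdef
  have hxg : ∀ v : Fin n → ℝ, (∑ i, x i * v i) = α⁻¹ * g v := by
    intro v
    rw [hgrep, Finset.mul_sum]
    refine Finset.sum_congr rfl fun i _ => ?_
    simp only [hxdef, Pi.smul_apply, smul_eq_mul]
    ring
  have hxT : x ∈ T := by
    intro y hy
    have hfy : 0 < f y := (hf_nonneg y).lt_of_ne (Ne.symm hy)
    have key : ∀ ε : ℝ, 0 < ε → (∑ i, x i * y i) + Real.log (f y) ≤ c + ε := by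
      intro ε hε
      set l : ℝ := f y * Real.exp (-ε) with hldef
      have hl : l ∈ Set.Ioo (0:ℝ) 1 := by
        constructor
        · exact mul_pos hfy (Real.exp_pos _)
        · have h1 : l ≤ Real.exp (-ε) := by
            have := hf_le y
            nlinarith [Real.exp_pos (-ε)]
          have h2 : Real.exp (-ε) < 1 := Real.exp_lt_one_iff.2 (by linarith)
          linarith
      have hly : l ≤ f y := by
        have h1 : Real.exp (-ε) ≤ 1 := Real.exp_le_one_iff.2 (by linarith)
        nlinarith
      have hmemH : (Real.log (t / l))⁻¹ • y ∈ Hset f t :=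
        (hmem _).2 ⟨l, hl, y, hly, rfl⟩
      have hgl := hg _ (subset_closure hmemH)
      rw [g.map_smul, smul_eq_mul] at hgl
      have hlt : 0 < Real.log (t / l) := hlog_pos l hl
      have hgy : α⁻¹ * g y < Real.log (t / l) := by
        have h1 : g y < α * Real.log (t / l) := by
          calc g y = Real.log (t / l) * ((Real.log (t / l))⁻¹ * g y) := by
                field_simp
            _ < Real.log (t / l) * α := mul_lt_mul_of_pos_left hgl hlt
            _ = α * Real.log (t / l) := mul_comm _ _
        calc α⁻¹ * g y < α⁻¹ * (α * Real.log (t / l)) :=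
              mul_lt_mul_of_pos_left h1 (inv_pos.2 hα0)
          _ = Real.log (t / l) := by field_simp
      have hlogl : Real.log l = Real.log (f y) - ε := by
        rw [hldef, Real.log_mul (ne_of_gt hfy) (Real.exp_ne_zero _), Real.log_exp]
        ring
      have hlog2 : Real.log (t / l) = c - Real.log (f y) + ε := by
        rw [hlog_eq l hl, hlogl]; ring
      rw [hxg]
      linarith [hgy, hlog2.symm.le]
    by_contra hcon
    push_neg at hcon
    have h := key (((∑ i, x i * y i) + Real.log (f y) - c) / 2) (by linarith)
    linarith
  have hle := hz x hxT
  have hgt : (1:ℝ) < ∑ i, z i * x i := by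
    have hcomm : (∑ i, z i * x i) = ∑ i, x i * z i :=
      Finset.sum_congr rfl fun i _ => mul_comm _ _
    rw [hcomm, hxg]
    calc (1:ℝ) = α⁻¹ * α := by field_simp
      _ < α⁻¹ * g z := mul_lt_mul_of_pos_left hα (inv_pos.2 hα0)
  linarith
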